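/- Let e₁, e₂, … be an orthonormal basis of ℓ², let e = Σ_{n≥1} (1/n) eₙ and F = (span{e})^⊥. Then the subspaces Aₙ := {e₁,…,eₙ}^⊥ decrease to {0} (i.e. ⋂ₙ Aₙ = {0}), but Aₙ + F = ℓ² for every n; in particular (Aₙ + F) does not decrease to F. -/

import Mathlib

/-- Let `(eₙ)` be an orthonormal (Hilbert) basis of `ℓ²` (formalized as a Hilbert space `H`
with a Hilbert basis indexed by `ℕ`), let `e = Σₙ (1/(n+1)) eₙ` and `F = (span{e})ᗮ`.
Then the subspaces `Aₙ := {e₀,…,eₙ}ᗮ` decrease with intersection `{0}`, but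
`Aₙ + F = ℓ²` for every `n`; since `F ≠ ℓ²`, the net `(Aₙ + F)` does not decrease to `F`. -/
theorem infinite_dim_perturbation_not_oContinuous
    {H : Type*} [NormedAddCommGroup H] [InnerProductSpace ℝ H] [CompleteSpace H]
    (b : HilbertBasis ℕ ℝ H) (v : H) (hv : v = ∑' n : ℕ, (((n : ℝ) + 1)⁻¹) • b n)
    (F : Submodule ℝ H) (hF : F = (ℝ ∙ v)ᗮ)
    (A : ℕ → Submodule ℝ H)
    (hA : ∀ n, A n = (Submodule.span ℝ (b '' Set.Iic n))ᗮ) :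
    Antitone A ∧ (⋂ n, (A n : Set H)) = {0} ∧ (∀ n, A n ⊔ F = ⊤) ∧ F ≠ ⊤ := by
  classical
  set c : ℕ → ℝ := fun n => ((n : ℝ) + 1)⁻¹ with hc
  have hcpos : ∀ n, 0 < c n := fun n => by positivity
  -- c is square-summable
  have hcsq : Summable fun n : ℕ => ‖c n‖ ^ (2 : ENNReal).toReal := by
    have h0 : Summable fun n : ℕ => ((n : ℝ) + 1)⁻¹ ^ (2 : ℕ) := by
      have h := (summable_nat_add_iff 1).mpr (Real.summable_one_div_nat_pow.mpr one_lt_two)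
      exact h.congr fun n => by push_cast; rw [one_div, ← inv_pow]
    refine h0.congr fun n => ?_
    rw [show (2 : ENNReal).toReal = ((2 : ℕ) : ℝ) by norm_num, Real.rpow_natCast]
    rw [Real.norm_eq_abs, abs_of_pos (hcpos n)]
  have hmem : Memℓp c 2 := memℓp_gen hcsq
  set g : lp (fun _ : ℕ => ℝ) 2 := ⟨c, hmem⟩ with hg
  have hsum : HasSum (fun n => c n • b n) (b.repr.symm g) := by
    simpa using b.hasSum_repr_symm g
  have hveq : v = b.repr.symm g := by rw [hv, hsum.tsum_eq]
  have hinner : ∀ k, inner ℝ (b k) v = c k := by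
    intro k
    rw [← b.repr_apply_apply, hveq]
    simp [hg]
  have horth := orthonormal_iff_ite.mp b.orthonormal
  -- Part 1: Antitone
  have hAnt : Antitone A := by
    intro m n h
    rw [hA, hA]
    exact Submodule.orthogonal_le (Submodule.span_mono
      (Set.image_mono (Set.Iic_subset_Iic.mpr h)))
  refine ⟨hAnt, ?_, ?_, ?_⟩
  -- Part 2: intersection is {0}
  · ext x
    simp only [Set.mem_iInter, SetLike.mem_coe, Set.mem_singleton_iff]
    constructor
    · intro h
      have hz : ∀ k, inner ℝ (b k) x = (0 : ℝ) := by
        intro k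
        have hx := h k
        rw [hA k] at hx
        have hbk : b k ∈ Submodule.span ℝ (b '' Set.Iic k) :=
          Submodule.subset_span ⟨k, Set.mem_Iic.mpr le_rfl, rfl⟩
        exact Submodule.inner_right_of_mem_orthogonal hbk hx
      have : b.repr x = 0 := by
        apply lp.ext
        funext i
        rw [b.repr_apply_apply, hz i]
        rfl
      have := congrArg b.repr.symm this
      simpa using this
    · intro h; rw [h]; exact fun n => Submodule.zero_mem _
  -- Part 3: A n ⊔ F = ⊤
  · intro n
    set s : H := ∑ k ∈ Finset.Iic n, c k • b k with hs
    set w : H := v - s with hw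
    have hbkw : ∀ k ≤ n, inner ℝ (b k) w = (0 : ℝ) := by
      intro k hk
      rw [hw, inner_sub_right, hinner, hs, inner_sum]
      have : ∀ j ∈ Finset.Iic n, inner ℝ (b k) (c j • b j) = if k = j then c j else 0 := by
        intro j _
        rw [real_inner_smul_right, horth k j]
        split <;> simp_all
      rw [Finset.sum_congr rfl this, Finset.sum_ite_eq (Finset.Iic n) k c]
      simp [Finset.mem_Iic.mpr hk]
    have hsmem : s ∈ Submodule.span ℝ (b '' Set.Iic n) := by
      refine Submodule.sum_mem _ fun k hk => Submodule.smul_mem _ _ ?_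
      exact Submodule.subset_span ⟨k, Finset.mem_Iic.mp hk, rfl⟩
    have hwA : w ∈ A n := by
      rw [hA, Submodule.mem_orthogonal]
      intro u hu
      induction hu using Submodule.span_induction with
      | mem u hu =>
        obtain ⟨k, hk, rfl⟩ := hu
        exact hbkw k hk
      | zero => simp
      | add u u' _ _ h1 h2 => rw [inner_add_left, h1, h2, add_zero]
      | smul a u _ h1 => rw [real_inner_smul_left, h1, mul_zero]
    have hwne : w ≠ 0 := by
      intro h0
      have h1 : inner ℝ (b (n + 1)) w = (c (n + 1) : ℝ) := by
        rw [hw, inner_sub_right, hinner, hs, inner_sum]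
        have hj0 : ∀ j ∈ Finset.Iic n, inner ℝ (b (n + 1)) (c j • b j) = (0 : ℝ) := by
          intro j hj
          have hne : n + 1 ≠ j := by have := Finset.mem_Iic.mp hj; omega
          rw [real_inner_smul_right, horth (n + 1) j]
          simp [hne]
        rw [Finset.sum_congr rfl hj0]
        simp
      rw [h0] at h1
      simp only [inner_zero_right] at h1
      exact absurd h1.symm (hcpos (n + 1)).ne'
    have hvw : inner ℝ v w ≠ (0 : ℝ) := by
      have hsw : inner ℝ s w = (0 : ℝ) :=
        Submodule.inner_right_of_mem_orthogonal hsmem (by rw [hA n] at hwA; exact hwA)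
      have hws : w + s = v := by rw [hw]; abel
      have : (inner ℝ v w : ℝ) = inner ℝ w w + inner ℝ s w := by
        rw [← hws, inner_add_left]
      rw [this, hsw, add_zero]
      simpa using hwne
    rw [eq_top_iff]
    intro x _
    set d : ℝ := inner ℝ v x / inner ℝ v w with hd
    have hx2 : x - d • w ∈ F := by
      rw [hF, Submodule.mem_orthogonal_singleton_iff_inner_right]
      rw [inner_sub_right, real_inner_smul_right, hd]
      field_simp
      simp
    exact Submodule.mem_sup.mpr ⟨d • w, Submodule.smul_mem _ _ hwA, x - d • w, hx2, by abel⟩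
  -- Part 4: F ≠ ⊤
  · intro h
    have hvF : v ∈ F := h ▸ Submodule.mem_top
    rw [hF, Submodule.mem_orthogonal_singleton_iff_inner_right, inner_self_eq_zero] at hvF
    have := hinner 0
    rw [hvF] at this
    simp [hc] at this
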